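/- Let ℓ be a prime, M a positive integer, r = ν_ℓ(M) the ℓ-adic valuation of M, and s ≥ 0 an integer. Then ℓ² · #{ σ ∈ Mat₂(ℤ/ℓ^{r+s}ℤ) : det(σ) ≡ M (mod ℓ^{r+s}) } = ℓ^{2r} · ( ℓ^{3s}·(ℓ+1)·(ℓ^{r+1} − 1) + δ(s) ), where δ(s) = 1 if s = 0 and δ(s) = 0 if s ≥ 1. Equivalently, the count equals ℓ^{2(r−1)}·(ℓ^{3s}(ℓ+1)(ℓ^{r+1}−1) + δ(s)). -/

import Mathlib

open Finset

namespace DetCountAux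
open scoped Classical

variable {p n : ℕ} [Fact p.Prime] [NeZero (p ^ n)]

/-- valuation of an element of `ZMod (p^n)` -/
def nu (p n : ℕ) (x : ZMod (p ^ n)) : ℕ :=
  if x = 0 then n else padicValNat p x.val

lemma hp2 : 2 ≤ p := (Fact.out : p.Prime).two_le

lemma cast_val (x : ZMod (p ^ n)) : ((x.val : ℕ) : ZMod (p ^ n)) = x := by
  rw [ZMod.natCast_val, ZMod.cast_id]

/-- L1 -/
lemma pow_dvd_iff_val {k : ℕ} (hk : k ≤ n) (x : ZMod (p ^ n)) :
    (p : ZMod (p ^ n)) ^ k ∣ x ↔ p ^ k ∣ x.val := by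
  constructor
  · rintro ⟨y, hy⟩
    have h1 : x = ((p ^ k * y.val : ℕ) : ZMod (p ^ n)) := by
      push_cast
      rw [cast_val, hy]
    have h2 : x.val = (p ^ k * y.val) % p ^ n := by rw [h1, ZMod.val_natCast]
    rw [h2]
    exact (Nat.dvd_mod_iff (pow_dvd_pow p hk)).2 ⟨y.val, rfl⟩
  · rintro ⟨c, hc⟩
    refine ⟨(c : ZMod (p ^ n)), ?_⟩
    rw [← cast_val x, hc]
    push_cast
    ring

/-- L2 -/
lemma sum_dvd_val {k : ℕ} (hk : k ≤ n) :
    (∑ x : ZMod (p ^ n), if p ^ k ∣ x.val then 1 else 0) = p ^ (n - k) := by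
  have hq : 0 < p ^ n := pow_pos (by have := (Fact.out : p.Prime).two_le; omega) n
  rw [Finset.sum_boole]
  norm_cast
  rw [← Finset.card_range (p ^ (n - k))]
  apply Finset.card_bij' (fun x _ => x.val / p ^ k) (fun a _ => ((p ^ k * a : ℕ) : ZMod (p ^ n)))
  · intro x hx
    simp only [Finset.mem_filter, Finset.mem_univ, true_and] at hx
    obtain ⟨c, hc⟩ := hx
    have hlt : x.val < p ^ n := ZMod.val_lt x
    rw [hc] at hlt ⊢
    rw [Nat.mul_div_cancel_left _ (pow_pos (by have := (Fact.out : p.Prime).two_le; omega) k)]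
    rw [Finset.mem_range]
    by_contra h
    push_neg at h
    have : p ^ n ≤ p ^ k * c := by
      calc p ^ n = p ^ k * p ^ (n - k) := by rw [← pow_add]; congr 1; omega
      _ ≤ p ^ k * c := Nat.mul_le_mul_left _ h
    omega
  · intro a ha
    rw [Finset.mem_range] at ha
    have hlt : p ^ k * a < p ^ n := by
      calc p ^ k * a < p ^ k * p ^ (n - k) := by
            apply Nat.mul_lt_mul_left (pow_pos (by have := (Fact.out : p.Prime).two_le; omega) k) |>.mpr ha
      _ = p ^ n := by rw [← pow_add]; congr 1; omega
    simp only [Finset.mem_filter, Finset.mem_univ, true_and]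
    rw [ZMod.val_cast_of_lt hlt]
    exact ⟨a, rfl⟩
  · intro x hx
    simp only [Finset.mem_filter, Finset.mem_univ, true_and] at hx
    rw [Nat.mul_div_cancel' hx, cast_val]
  · intro a ha
    rw [Finset.mem_range] at ha
    have hlt : p ^ k * a < p ^ n := by
      calc p ^ k * a < p ^ k * p ^ (n - k) := by
            apply Nat.mul_lt_mul_left (pow_pos (by have := (Fact.out : p.Prime).two_le; omega) k) |>.mpr ha
      _ = p ^ n := by rw [← pow_add]; congr 1; omega
    rw [ZMod.val_cast_of_lt hlt, Nat.mul_div_cancel_left _ (pow_pos (by have := (Fact.out : p.Prime).two_le; omega) k)]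


lemma ppos : 0 < p := by have := (Fact.out : p.Prime).two_le; omega

/-- L3 -/
lemma pow_mul_eq_zero_iff {k : ℕ} (hk : k ≤ n) (y : ZMod (p ^ n)) :
    (p : ZMod (p ^ n)) ^ k * y = 0 ↔ p ^ (n - k) ∣ y.val := by
  have h1 : (p : ZMod (p ^ n)) ^ k * y = ((p ^ k * y.val : ℕ) : ZMod (p ^ n)) := by
    push_cast; rw [ZMod.natCast_val, ZMod.cast_id]
  rw [h1, ZMod.natCast_eq_zero_iff]
  constructor
  · intro h
    have h2 : p ^ k * p ^ (n - k) ∣ p ^ k * y.val := by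
      rw [← pow_add]
      rwa [show k + (n - k) = n by omega]
    exact (Nat.mul_dvd_mul_iff_left (pow_pos (by have := (Fact.out : p.Prime).two_le; omega) k)).1 h2
  · intro h
    have h2 : p ^ k * p ^ (n - k) ∣ p ^ k * y.val := Nat.mul_dvd_mul_left _ h
    rw [← pow_add, show k + (n - k) = n by omega] at h2
    exact h2

lemma nu_lt (x : ZMod (p ^ n)) (hx : x ≠ 0) : nu p n x < n := by
  unfold nu
  rw [if_neg hx]
  have hv : x.val ≠ 0 := fun hv => hx (by rwa [ZMod.val_eq_zero] at hv)
  have hd : p ^ padicValNat p x.val ∣ x.val := pow_padicValNat_dvd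
  have hle : p ^ padicValNat p x.val ≤ x.val := Nat.le_of_dvd (Nat.pos_of_ne_zero hv) hd
  exact (Nat.pow_lt_pow_iff_right (Fact.out : p.Prime).one_lt).1 (lt_of_le_of_lt hle (ZMod.val_lt x))

lemma nu_le (x : ZMod (p ^ n)) : nu p n x ≤ n := by
  by_cases hx : x = 0
  · unfold nu; rw [if_pos hx]
  · exact le_of_lt (nu_lt x hx)

/-- L4 -/
lemma exists_unit (x : ZMod (p ^ n)) :
    ∃ u : (ZMod (p ^ n))ˣ, x = (p : ZMod (p ^ n)) ^ (nu p n x) * u := by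
  by_cases hx : x = 0
  · refine ⟨1, ?_⟩
    unfold nu
    rw [if_pos hx, hx]
    rw [Units.val_one, mul_one]
    rw [show ((p : ZMod (p ^ n)) ^ n) = ((p ^ n : ℕ) : ZMod (p ^ n)) by push_cast; ring]
    rw [ZMod.natCast_self]
  · have hv : x.val ≠ 0 := fun hv => hx (by rwa [ZMod.val_eq_zero] at hv)
    have hfact : x.val.factorization p = padicValNat p x.val :=
      Nat.factorization_def _ (Fact.out : p.Prime)
    have hxc : p ^ padicValNat p x.val * (x.val / p ^ padicValNat p x.val) = x.val := by
      rw [← hfact]; exact Nat.ordProj_mul_ordCompl_eq_self x.val p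
    have hcop : ¬ p ∣ (x.val / p ^ padicValNat p x.val) := by
      rw [← hfact]; exact Nat.not_dvd_ordCompl (Fact.out : p.Prime) hv
    have hcop2 : Nat.Coprime (x.val / p ^ padicValNat p x.val) (p ^ n) :=
      Nat.Coprime.pow_right n (((Fact.out : p.Prime).coprime_iff_not_dvd.2 hcop).symm)
    refine ⟨ZMod.unitOfCoprime _ hcop2, ?_⟩
    have hnu : nu p n x = padicValNat p x.val := by unfold nu; rw [if_neg hx]
    rw [hnu, ZMod.coe_unitOfCoprime]
    conv_lhs => rw [← cast_val x, ← hxc]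
    push_cast; ring


/-- L5: fiber count of multiplication -/
lemma fiber_count (x t : ZMod (p ^ n)) :
    (∑ y : ZMod (p ^ n), if x * y = t then 1 else 0)
      = if (p : ZMod (p ^ n)) ^ (nu p n x) ∣ t then p ^ (nu p n x) else 0 := by
  obtain ⟨u, hx⟩ := exists_unit x
  have hle := nu_le x
  set j := nu p n x with hj
  by_cases h : (p : ZMod (p ^ n)) ^ j ∣ t
  · obtain ⟨w, rfl⟩ := h
    rw [if_pos ⟨w, rfl⟩]
    have hbij : Function.Bijective
        (fun z : ZMod (p ^ n) => (↑u⁻¹ : ZMod (p ^ n)) * (z + w)) := by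
      constructor
      · intro a b hab
        simp only at hab
        have := (Units.mul_right_inj u).2 hab
        rw [← mul_assoc, ← mul_assoc] at this
        rw [Units.mul_inv, one_mul, one_mul] at this
        exact add_right_cancel this
      · intro y
        refine ⟨↑u * y - w, ?_⟩
        simp only [sub_add_cancel, ← mul_assoc, Units.inv_mul, one_mul]
    have key : ∀ z : ZMod (p ^ n),
        (if (p : ZMod (p ^ n)) ^ j * z = 0 then (1:ℕ) else 0)
          = (if x * ((↑u⁻¹ : ZMod (p ^ n)) * (z + w)) = (p : ZMod (p ^ n)) ^ j * w
              then (1:ℕ) else 0) := by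
      intro z
      have huu : (↑u : ZMod (p^n)) * ↑u⁻¹ = 1 := Units.mul_inv u
      have hcalc : x * ((↑u⁻¹ : ZMod (p^n)) * (z + w))
          = (p : ZMod (p^n)) ^ j * z + (p : ZMod (p^n)) ^ j * w := by
        rw [hx]
        calc (p : ZMod (p^n)) ^ j * ↑u * (↑u⁻¹ * (z+w))
            = (p : ZMod (p^n)) ^ j * ((↑u * ↑u⁻¹) * (z+w)) := by ring
          _ = (p : ZMod (p^n)) ^ j * z + (p : ZMod (p^n)) ^ j * w := by rw [huu]; ring
      apply if_congr _ rfl rfl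
      rw [hcalc]
      exact add_eq_right.symm
    rw [← Fintype.sum_bijective _ hbij _ _ key]
    have step : ∀ z : ZMod (p ^ n),
        (if (p : ZMod (p ^ n)) ^ j * z = 0 then (1:ℕ) else 0)
          = (if p ^ (n - j) ∣ z.val then (1:ℕ) else 0) :=
      fun z => if_congr (pow_mul_eq_zero_iff hle z) rfl rfl
    rw [Finset.sum_congr rfl (fun z _ => step z), sum_dvd_val (by omega)]
    congr 1
    omega
  · rw [if_neg h]
    apply Finset.sum_eq_zero
    intro y _
    rw [if_neg]
    intro heq
    refine h ⟨↑u * y, ?_⟩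
    rw [← heq, hx]
    ring

/-- L6 -/
lemma pow_dvd_castM {M : ℕ} (hM : M ≠ 0) {k : ℕ} (hk : k ≤ n) :
    (p : ZMod (p ^ n)) ^ k ∣ (M : ZMod (p ^ n)) ↔ k ≤ padicValNat p M := by
  rw [pow_dvd_iff_val hk, ZMod.val_natCast, Nat.dvd_mod_iff (pow_dvd_pow p hk),
    padicValNat_dvd_iff_le hM]

/-- L8 -/
lemma W_eval {r j j' : ℕ} (hj : j ≤ n) (hj' : j' ≤ n) (m : ZMod (p ^ n))
    (hm : ∀ k, k ≤ n → ((p : ZMod (p ^ n)) ^ k ∣ m ↔ k ≤ r)) :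
    (∑ u : ZMod (p ^ n), (if (p : ZMod (p ^ n)) ^ j ∣ u then (p:ℕ) ^ j else 0) *
        (if (p : ZMod (p ^ n)) ^ j' ∣ (m + u) then (p:ℕ) ^ j' else 0))
      = if min j j' ≤ r then p ^ (n + min j j') else 0 := by
  by_cases hmin : min j j' ≤ r
  · rw [if_pos hmin]
    by_cases hjj : j ≤ j'
    · have hminj : min j j' = j := min_eq_left hjj
      rw [hminj] at hmin ⊢
      have hpm : (p : ZMod (p^n)) ^ j ∣ m := (hm j hj).2 hmin
      have step : ∀ u : ZMod (p^n),
          (if (p : ZMod (p^n)) ^ j ∣ u then (p:ℕ) ^ j else 0) *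
            (if (p : ZMod (p^n)) ^ j' ∣ (m + u) then (p:ℕ) ^ j' else 0)
          = if (p : ZMod (p^n)) ^ j' ∣ (m + u) then (p:ℕ) ^ (j + j') else 0 := by
        intro u
        by_cases h2 : (p : ZMod (p^n)) ^ j' ∣ (m + u)
        · have h1 : (p : ZMod (p^n)) ^ j ∣ u := by
            have h3 : (p : ZMod (p^n)) ^ j ∣ m + u := (pow_dvd_pow _ hjj).trans h2
            have h4 := dvd_sub h3 hpm
            rwa [add_sub_cancel_left] at h4
          rw [if_pos h1, if_pos h2, if_pos h2, pow_add]
        · rw [if_neg h2, if_neg h2, mul_zero]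
      rw [Finset.sum_congr rfl (fun u _ => step u)]
      have reidx : (∑ u : ZMod (p^n), if (p : ZMod (p^n)) ^ j' ∣ (m + u) then (p:ℕ) ^ (j+j') else 0)
          = ∑ u : ZMod (p^n), if (p : ZMod (p^n)) ^ j' ∣ u then (p:ℕ) ^ (j+j') else 0 :=
        Fintype.sum_bijective (fun u : ZMod (p^n) => m + u) (Equiv.addLeft m).bijective _ _
          (fun u => rfl)
      rw [reidx]
      have step2 : ∀ u : ZMod (p^n),
          (if (p : ZMod (p^n)) ^ j' ∣ u then (p:ℕ) ^ (j+j') else 0)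
          = (if p ^ j' ∣ u.val then (1:ℕ) else 0) * p ^ (j + j') :=
        fun u => by rw [if_congr (pow_dvd_iff_val hj' u) rfl rfl, ite_mul, one_mul, zero_mul]
      rw [Finset.sum_congr rfl (fun u _ => step2 u), ← Finset.sum_mul, sum_dvd_val hj',
        ← pow_add]
      congr 1
      omega
    · push_neg at hjj
      have hminj : min j j' = j' := min_eq_right (le_of_lt hjj)
      rw [hminj] at hmin ⊢
      have hpm : (p : ZMod (p^n)) ^ j' ∣ m := (hm j' hj').2 hmin
      have step : ∀ u : ZMod (p^n),
          (if (p : ZMod (p^n)) ^ j ∣ u then (p:ℕ) ^ j else 0) *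
            (if (p : ZMod (p^n)) ^ j' ∣ (m + u) then (p:ℕ) ^ j' else 0)
          = if (p : ZMod (p^n)) ^ j ∣ u then (p:ℕ) ^ (j + j') else 0 := by
        intro u
        by_cases h1 : (p : ZMod (p^n)) ^ j ∣ u
        · have h2 : (p : ZMod (p^n)) ^ j' ∣ m + u :=
            dvd_add hpm ((pow_dvd_pow _ (le_of_lt hjj)).trans h1)
          rw [if_pos h1, if_pos h1, if_pos h2, pow_add]
        · rw [if_neg h1, if_neg h1, zero_mul]
      rw [Finset.sum_congr rfl (fun u _ => step u)]
      have step2 : ∀ u : ZMod (p^n),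
          (if (p : ZMod (p^n)) ^ j ∣ u then (p:ℕ) ^ (j+j') else 0)
          = (if p ^ j ∣ u.val then (1:ℕ) else 0) * p ^ (j + j') :=
        fun u => by rw [if_congr (pow_dvd_iff_val hj u) rfl rfl, ite_mul, one_mul, zero_mul]
      rw [Finset.sum_congr rfl (fun u _ => step2 u), ← Finset.sum_mul, sum_dvd_val hj,
        ← pow_add]
      congr 1
      omega
  · rw [if_neg hmin]
    apply Finset.sum_eq_zero
    intro u _
    by_cases h1 : (p : ZMod (p^n)) ^ j ∣ u
    · by_cases h2 : (p : ZMod (p^n)) ^ j' ∣ (m + u)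
      · exfalso
        have d1 : (p : ZMod (p^n)) ^ (min j j') ∣ u := (pow_dvd_pow _ (min_le_left _ _)).trans h1
        have d2 : (p : ZMod (p^n)) ^ (min j j') ∣ m + u :=
          (pow_dvd_pow _ (min_le_right _ _)).trans h2
        have d3 := dvd_sub d2 d1
        rw [add_sub_cancel_right] at d3
        exact hmin ((hm _ (le_trans (min_le_left _ _) hj)).1 d3)
      · rw [if_neg h2, mul_zero]
    · rw [if_neg h1, zero_mul]


/-- closed form for number of elements of valuation j -/
def Anat (p n : ℕ) : ℕ → ℕ := fun j => if j = n then 1 else p ^ (n - j) - p ^ (n - j - 1)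

lemma A_top : (∑ x : ZMod (p ^ n), if nu p n x = n then (1:ℕ) else 0) = 1 := by
  have step : ∀ x : ZMod (p ^ n), (if nu p n x = n then (1:ℕ) else 0)
      = if (0 : ZMod (p ^ n)) = x then (1:ℕ) else 0 := by
    intro x
    apply if_congr _ rfl rfl
    constructor
    · intro hnu
      by_contra hx
      have := nu_lt x (fun h => hx h.symm)
      omega
    · intro hx
      rw [← hx]
      unfold nu
      rw [if_pos rfl]
  rw [Finset.sum_congr rfl (fun x _ => step x), Finset.sum_ite_eq univ (0 : ZMod (p ^ n)) (fun _ => 1),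
    if_pos (Finset.mem_univ _)]

lemma A_eq {j : ℕ} (hj : j < n) :
    (∑ x : ZMod (p ^ n), if nu p n x = j then (1:ℕ) else 0) = p ^ (n - j) - p ^ (n - j - 1) := by
  have key : ∀ x : ZMod (p ^ n), (if p ^ j ∣ x.val then (1:ℕ) else 0)
      = (if nu p n x = j then (1:ℕ) else 0) + (if p ^ (j+1) ∣ x.val then (1:ℕ) else 0) := by
    intro x
    by_cases hx : x = 0
    · have hv : x.val = 0 := by rw [hx, ZMod.val_zero]
      have hnu : nu p n x = n := by unfold nu; rw [if_pos hx]
      rw [hv, hnu]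
      rw [if_pos (dvd_zero _), if_pos (dvd_zero _), if_neg (by omega)]
    · have hv : x.val ≠ 0 := fun hv => hx (by rwa [ZMod.val_eq_zero] at hv)
      have hnu : nu p n x = padicValNat p x.val := by unfold nu; rw [if_neg hx]
      rw [hnu, if_congr (padicValNat_dvd_iff_le hv) rfl rfl,
        if_congr (padicValNat_dvd_iff_le hv) rfl rfl]
      split_ifs <;> omega
  have hsum := Finset.sum_congr rfl (fun x (_ : x ∈ univ) => key x)
  rw [sum_dvd_val (by omega : j ≤ n), Finset.sum_add_distrib, sum_dvd_val (by omega : j + 1 ≤ n)] at hsum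
  have e1 : (2:ℕ) ≤ p := (Fact.out : p.Prime).two_le
  have e2 : p ^ (n - j - 1) ≤ p ^ (n - j) := Nat.pow_le_pow_right (by omega) (by omega)
  have e3 : n - (j+1) = n - j - 1 := by omega
  rw [e3] at hsum
  omega

/-- L10 : grouping by valuation -/
lemma group_nu (f : ℕ → ℕ) :
    (∑ x : ZMod (p ^ n), f (nu p n x))
      = ∑ j ∈ Finset.range (n+1), (∑ x : ZMod (p ^ n), if nu p n x = j then (1:ℕ) else 0) * f j := by
  have step : ∀ x : ZMod (p ^ n), f (nu p n x)
      = ∑ j ∈ Finset.range (n+1), if nu p n x = j then f j else 0 := by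
    intro x
    rw [Finset.sum_ite_eq (Finset.range (n+1)) (nu p n x) f,
      if_pos (Finset.mem_range.2 (Nat.lt_succ_of_le (nu_le x)))]
  rw [Finset.sum_congr rfl (fun x _ => step x), Finset.sum_comm]
  apply Finset.sum_congr rfl
  intro j _
  rw [Finset.sum_mul]
  apply Finset.sum_congr rfl
  intro x _
  rw [ite_mul, one_mul, zero_mul]


/-- the count `cnt t` of pairs with product `t`, in valuation form -/
noncomputable def cnt (p n : ℕ) [Fact p.Prime] [NeZero (p ^ n)] (t : ZMod (p ^ n)) : ℕ :=
  ∑ x : ZMod (p ^ n), if (p : ZMod (p ^ n)) ^ (nu p n x) ∣ t then p ^ (nu p n x) else 0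

lemma cnt_eq (t : ZMod (p ^ n)) :
    (∑ z : (ZMod (p ^ n)) × (ZMod (p ^ n)), if z.1 * z.2 = t then (1:ℕ) else 0) = cnt p n t := by
  rw [Fintype.sum_prod_type]
  exact Finset.sum_congr rfl (fun x _ => fiber_count x t)

/-- main combinatorial formula -/
theorem count_eq {M r : ℕ} (hM : M ≠ 0) (hr : r = padicValNat p M) :
    Nat.card {σ : Matrix (Fin 2) (Fin 2) (ZMod (p ^ n)) // σ.det = (M : ZMod (p ^ n))}
      = ∑ j ∈ Finset.range (n+1), ∑ j' ∈ Finset.range (n+1),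
          Anat p n j * Anat p n j' * (if min j j' ≤ r then p ^ (n + min j j') else 0) := by
  classical
  set R := ZMod (p ^ n)
  set m := (M : R) with hm
  have hmdvd : ∀ k, k ≤ n → ((p : R) ^ k ∣ m ↔ k ≤ r) := by
    intro k hk
    rw [hm, pow_dvd_castM hM hk, hr]
  -- step 1 : Nat.card to sum over quadruples
  have h1 : Nat.card {σ : Matrix (Fin 2) (Fin 2) R // σ.det = m}
      = ∑ v : (R × R) × (R × R), if v.1.1 * v.1.2 - v.2.1 * v.2.2 = m then (1:ℕ) else 0 := by
    rw [Nat.card_eq_fintype_card, Fintype.card_subtype, Finset.card_filter]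
    apply (Fintype.sum_bijective (fun v : (R × R) × (R × R) => !![v.1.1, v.2.1; v.2.2, v.1.2])
      ?_ _ _ ?_).symm
    · rw [Function.bijective_iff_has_inverse]
      refine ⟨fun σ => ((σ 0 0, σ 1 1), (σ 0 1, σ 1 0)), ?_, ?_⟩
      · intro v
        simp [Matrix.cons_val_zero, Matrix.cons_val_one, Matrix.head_cons]
      · intro σ
        exact (Matrix.eta_fin_two σ).symm
    · intro v
      apply if_congr _ rfl rfl
      rw [Matrix.det_fin_two_of]
  rw [h1]
  -- step 2 : split into (ad) and (bc) sums, rewrite condition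
  rw [Fintype.sum_prod_type]
  have h2 : ∀ ad : R × R, (∑ bc : R × R, if ad.1 * ad.2 - bc.1 * bc.2 = m then (1:ℕ) else 0)
      = ∑ bc : R × R, if ad.1 * ad.2 = m + bc.1 * bc.2 then (1:ℕ) else 0 := by
    intro ad
    exact Finset.sum_congr rfl (fun bc _ => if_congr sub_eq_iff_eq_add rfl rfl)
  rw [Finset.sum_congr rfl (fun ad _ => h2 ad), Finset.sum_comm]
  have h3 : ∀ bc : R × R, (∑ ad : R × R, if ad.1 * ad.2 = m + bc.1 * bc.2 then (1:ℕ) else 0)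
      = cnt p n (m + bc.1 * bc.2) := fun bc => cnt_eq _
  rw [Finset.sum_congr rfl (fun bc _ => h3 bc)]
  -- step 3 : fiberwise over u = bc.1 * bc.2
  have h4 : ∀ bc : R × R, cnt p n (m + bc.1 * bc.2)
      = ∑ u : R, if bc.1 * bc.2 = u then cnt p n (m + u) else 0 := by
    intro bc
    rw [Finset.sum_ite_eq univ (bc.1 * bc.2) (fun u => cnt p n (m + u)),
      if_pos (Finset.mem_univ _)]
  rw [Finset.sum_congr rfl (fun bc _ => h4 bc), Finset.sum_comm]
  have h5 : ∀ u : R, (∑ bc : R × R, if bc.1 * bc.2 = u then cnt p n (m + u) else 0)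
      = cnt p n u * cnt p n (m + u) := by
    intro u
    rw [← cnt_eq u, Finset.sum_mul]
    exact Finset.sum_congr rfl (fun bc _ => by rw [ite_mul, one_mul, zero_mul])
  rw [Finset.sum_congr rfl (fun u _ => h5 u)]
  -- step 4 : expand both cnt's and push the u-sum inside
  have h6 : ∀ u : R, cnt p n u * cnt p n (m + u)
      = ∑ x : R, ∑ x' : R,
          (if (p : R) ^ (nu p n x) ∣ u then (p:ℕ) ^ (nu p n x) else 0) *
          (if (p : R) ^ (nu p n x') ∣ (m + u) then (p:ℕ) ^ (nu p n x') else 0) := by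
    intro u
    rw [cnt, cnt, Finset.sum_mul_sum]
  rw [Finset.sum_congr rfl (fun u _ => h6 u), Finset.sum_comm]
  have h7 : ∀ x : R, (∑ u : R, ∑ x' : R,
          (if (p : R) ^ (nu p n x) ∣ u then (p:ℕ) ^ (nu p n x) else 0) *
          (if (p : R) ^ (nu p n x') ∣ (m + u) then (p:ℕ) ^ (nu p n x') else 0))
      = ∑ x' : R, (if min (nu p n x) (nu p n x') ≤ r
          then p ^ (n + min (nu p n x) (nu p n x')) else 0) := by
    intro x
    rw [Finset.sum_comm]
    exact Finset.sum_congr rfl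
      (fun x' _ => W_eval (nu_le x) (nu_le x') m hmdvd)
  rw [Finset.sum_congr rfl (fun x _ => h7 x)]
  -- step 5 : group by valuation, twice
  have h8 := group_nu (p := p) (n := n)
    (fun j => ∑ x' : R, if min j (nu p n x') ≤ r then p ^ (n + min j (nu p n x')) else 0)
  rw [h8]
  apply Finset.sum_congr rfl
  intro j hj
  rw [group_nu (p := p) (n := n) (fun j' => if min j j' ≤ r then p ^ (n + min j j') else 0)]
  rw [Finset.mem_range] at hj
  have hA : ∀ j, j < n + 1 → (∑ x : R, if nu p n x = j then (1:ℕ) else 0) = Anat p n j := by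
    intro i hi
    by_cases hin : i = n
    · rw [hin, A_top, Anat, if_pos rfl]
    · rw [A_eq (by omega), Anat, if_neg hin]
  rw [hA j hj, Finset.mul_sum]
  apply Finset.sum_congr rfl
  intro j' hj'
  rw [Finset.mem_range] at hj'
  rw [hA j' hj']
  ring


/-! ### Pure integer arithmetic -/

/-- integer version of `Anat` -/
def aI (p n : ℕ) (j : ℕ) : ℤ := if j = n then 1 else (p:ℤ) ^ (n - j) - (p:ℤ) ^ (n - j - 1)

lemma tel_F (F : ℕ → ℤ) (a b : ℕ) (hab : a ≤ b) :
    (∑ i ∈ Finset.Ioc a b, (F (i-1) - F i)) = F a - F b := by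
  rw [show Finset.Ioc a b = Finset.Ico (a+1) (b+1) by ext j; simp [Nat.lt_succ_iff]]
  rw [Finset.sum_Ico_eq_sum_range, show b + 1 - (a+1) = b - a by omega]
  have step : ∀ k, F (a + 1 + k - 1) - F (a + 1 + k) = F (a + k) - F (a + (k+1)) := by
    intro k; congr 2 <;> omega
  rw [Finset.sum_congr rfl (fun k _ => step k)]
  rw [Finset.sum_range_sub' (fun k => F (a + k)) (b - a)]
  congr 2
  omega

lemma T_geom (p : ℕ) (k : ℕ) :
    (∑ i ∈ Finset.Ioc 0 k, ((p:ℤ) ^ i - (p:ℤ) ^ (i-1))) = (p:ℤ) ^ k - 1 := by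
  have step : ∀ i, (p:ℤ) ^ i - (p:ℤ) ^ (i-1)
      = ((fun t => -((p:ℤ) ^ t)) (i-1) - (fun t => -((p:ℤ) ^ t)) i) := by
    intro i; simp; ring
  calc (∑ i ∈ Finset.Ioc 0 k, ((p:ℤ) ^ i - (p:ℤ) ^ (i-1)))
      = ∑ i ∈ Finset.Ioc 0 k, ((fun t => -((p:ℤ) ^ t)) (i-1) - (fun t => -((p:ℤ) ^ t)) i) :=
        Finset.sum_congr rfl (fun i _ => step i)
    _ = (fun t => -((p:ℤ) ^ t)) 0 - (fun t => -((p:ℤ) ^ t)) k := tel_F (fun t => -((p:ℤ) ^ t)) 0 k (Nat.zero_le k)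
    _ = (p:ℤ) ^ k - 1 := by simp only [pow_zero]; ring

lemma T_weight (p n a b : ℕ) (hab : a ≤ b) (hb : b ≤ n) :
    (∑ i ∈ Finset.Ioc a b, ((p:ℤ) ^ i - (p:ℤ) ^ (i-1)) * ((p:ℤ) ^ (n - i)) ^ 2)
      = (p:ℤ) ^ (2*n - 1 - a) - (p:ℤ) ^ (2*n - 1 - b) := by
  have step : ∀ i ∈ Finset.Ioc a b, ((p:ℤ) ^ i - (p:ℤ) ^ (i-1)) * ((p:ℤ) ^ (n - i)) ^ 2
      = ((fun t => (p:ℤ) ^ (2*n - 1 - t)) (i-1) - (fun t => (p:ℤ) ^ (2*n - 1 - t)) i) := by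
    intro i hi
    rw [Finset.mem_Ioc] at hi
    simp only
    rw [sub_mul, ← pow_mul, ← pow_add, ← pow_add]
    congr 2 <;> omega
  calc (∑ i ∈ Finset.Ioc a b, ((p:ℤ) ^ i - (p:ℤ) ^ (i-1)) * ((p:ℤ) ^ (n - i)) ^ 2)
      = ∑ i ∈ Finset.Ioc a b,
          ((fun t => (p:ℤ) ^ (2*n - 1 - t)) (i-1) - (fun t => (p:ℤ) ^ (2*n - 1 - t)) i) :=
        Finset.sum_congr rfl step
    _ = (fun t => (p:ℤ) ^ (2*n - 1 - t)) a - (fun t => (p:ℤ) ^ (2*n - 1 - t)) b := tel_F (fun t => (p:ℤ) ^ (2*n - 1 - t)) a b hab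
    _ = (p:ℤ) ^ (2*n - 1 - a) - (p:ℤ) ^ (2*n - 1 - b) := rfl

lemma G1 {p n t : ℕ} (ht : t ≤ n) :
    (∑ j ∈ Finset.range (n+1), if t ≤ j then aI p n j else 0) = (p:ℤ) ^ (n - t) := by
  rw [← Finset.sum_filter,
    show (Finset.range (n+1)).filter (fun j => t ≤ j) = Finset.Icc t n by
      ext j; simp [Nat.lt_succ_iff]; omega]
  rw [show Finset.Icc t n = Finset.Ico t (n+1) by ext j; simp [Nat.lt_succ_iff]]
  rw [Finset.sum_Ico_succ_top (by omega : t ≤ n)]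
  by_cases htn : t = n
  · subst htn
    rw [show Finset.Ico t t = ∅ by simp, Finset.sum_empty, zero_add, aI, if_pos rfl]
    simp
  · rw [Finset.sum_Ico_eq_sum_range]
    have step : ∀ k ∈ Finset.range (n - t), aI p n (t + k)
        = ((fun i => (p:ℤ) ^ (n - t - i)) k - (fun i => (p:ℤ) ^ (n - t - i)) (k+1)) := by
      intro k hk
      rw [Finset.mem_range] at hk
      rw [aI, if_neg (by omega)]
      simp only
      congr 2 <;> omega
    rw [Finset.sum_congr rfl step, Finset.sum_range_sub' (fun i => (p:ℤ) ^ (n - t - i)) (n - t)]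
    rw [aI, if_pos rfl]
    simp only [Nat.sub_self, Nat.sub_zero, pow_zero]
    ring

lemma sq_expand (J : Finset ℕ) (f : ℕ → ℤ) :
    (∑ j ∈ J, f j) ^ 2 = ∑ j ∈ J, ∑ j' ∈ J, f j * f j' := by
  rw [sq, Finset.sum_mul_sum]

lemma tri_expand (J I : Finset ℕ) (F : ℕ → ℕ → ℤ) (d : ℕ → ℤ) :
    (∑ i ∈ I, d i * (∑ j ∈ J, F i j) ^ 2) = ∑ j ∈ J, ∑ j' ∈ J, ∑ i ∈ I, F i j * F i j' * d i := by
  have h1 : ∀ i, d i * (∑ j ∈ J, F i j) ^ 2 = ∑ j ∈ J, ∑ j' ∈ J, F i j * F i j' * d i := by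
    intro i
    rw [sq_expand, Finset.mul_sum]
    refine Finset.sum_congr rfl (fun j _ => ?_)
    rw [Finset.mul_sum]
    exact Finset.sum_congr rfl (fun j' _ => by ring)
  rw [Finset.sum_congr rfl (fun i _ => h1 i), Finset.sum_comm]
  exact Finset.sum_congr rfl (fun j _ => Finset.sum_comm)

lemma expand (J I : Finset ℕ) (A X : ℕ → ℤ) (Ψ : ℕ → ℕ → ℤ) (d : ℕ → ℤ) (c : ℤ) :
    (∑ j ∈ J, ∑ j' ∈ J, A j * A j' * (c * ((1 - X j * X j') * (1 + ∑ i ∈ I, Ψ i j * Ψ i j' * d i))))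
    = c * ((∑ j ∈ J, A j) ^ 2 - (∑ j ∈ J, A j * X j) ^ 2
        + ∑ i ∈ I, d i * ((∑ j ∈ J, A j * Ψ i j) ^ 2 - (∑ j ∈ J, A j * X j * Ψ i j) ^ 2)) := by
  have key : ∀ j j', A j * A j' * (c * ((1 - X j * X j') * (1 + ∑ i ∈ I, Ψ i j * Ψ i j' * d i)))
      = c * ((A j * A j') - (A j * X j) * (A j' * X j')
          + ((∑ i ∈ I, (A j * Ψ i j) * (A j' * Ψ i j') * d i)
            - (∑ i ∈ I, (A j * X j * Ψ i j) * (A j' * X j' * Ψ i j') * d i))) := by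
    intro j j'
    have e1 : (∑ i ∈ I, (A j * Ψ i j) * (A j' * Ψ i j') * d i)
        = A j * A j' * (∑ i ∈ I, Ψ i j * Ψ i j' * d i) := by
      rw [Finset.mul_sum]; exact Finset.sum_congr rfl (fun i _ => by ring)
    have e2 : (∑ i ∈ I, (A j * X j * Ψ i j) * (A j' * X j' * Ψ i j') * d i)
        = A j * X j * (A j' * X j') * (∑ i ∈ I, Ψ i j * Ψ i j' * d i) := by
      rw [Finset.mul_sum]; exact Finset.sum_congr rfl (fun i _ => by ring)
    rw [e1, e2]; ring
  rw [Finset.sum_congr rfl (fun j _ => Finset.sum_congr rfl (fun j' _ => key j j'))]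
  have split : ∀ j, (∑ j' ∈ J, c * ((A j * A j') - (A j * X j) * (A j' * X j')
          + ((∑ i ∈ I, (A j * Ψ i j) * (A j' * Ψ i j') * d i)
            - (∑ i ∈ I, (A j * X j * Ψ i j) * (A j' * X j' * Ψ i j') * d i))))
      = c * ((∑ j' ∈ J, A j * A j') - (∑ j' ∈ J, (A j * X j) * (A j' * X j'))
          + ((∑ j' ∈ J, ∑ i ∈ I, (A j * Ψ i j) * (A j' * Ψ i j') * d i)
            - (∑ j' ∈ J, ∑ i ∈ I, (A j * X j * Ψ i j) * (A j' * X j' * Ψ i j') * d i))) := by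
    intro j
    rw [← Finset.mul_sum]
    congr 1
    rw [Finset.sum_add_distrib, Finset.sum_sub_distrib, Finset.sum_sub_distrib]
  rw [Finset.sum_congr rfl (fun j _ => split j), ← Finset.mul_sum]
  congr 1
  rw [Finset.sum_add_distrib, Finset.sum_sub_distrib, Finset.sum_sub_distrib]
  have hsplit : (∑ i ∈ I, d i * ((∑ j ∈ J, A j * Ψ i j) ^ 2 - (∑ j ∈ J, A j * X j * Ψ i j) ^ 2))
      = (∑ i ∈ I, d i * (∑ j ∈ J, A j * Ψ i j) ^ 2)
        - (∑ i ∈ I, d i * (∑ j ∈ J, A j * X j * Ψ i j) ^ 2) := by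
    rw [← Finset.sum_sub_distrib]
    exact Finset.sum_congr rfl (fun i _ => by ring)
  rw [hsplit, sq_expand J A, sq_expand J (fun j => A j * X j),
    tri_expand J I (fun i j => A j * Ψ i j) d, tri_expand J I (fun i j => A j * X j * Ψ i j) d]


lemma PT (p : ℕ) {n r j j' : ℕ} (hj : j ≤ n) (hj' : j' ≤ n) :
    (if min j j' ≤ r then (p:ℤ) ^ (n + min j j') else 0)
      = (p:ℤ) ^ n * ((1 - (if r+1 ≤ j then (1:ℤ) else 0) * (if r+1 ≤ j' then (1:ℤ) else 0)) *
          (1 + ∑ i ∈ Finset.Ioc 0 n,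
            (if i ≤ j then (1:ℤ) else 0) * (if i ≤ j' then (1:ℤ) else 0) *
              ((p:ℤ)^i - (p:ℤ)^(i-1)))) := by
  have hk : min j j' ≤ n := le_trans (min_le_left _ _) hj
  have hsum : (∑ i ∈ Finset.Ioc 0 n,
        (if i ≤ j then (1:ℤ) else 0) * (if i ≤ j' then (1:ℤ) else 0) * ((p:ℤ)^i - (p:ℤ)^(i-1)))
      = (p:ℤ) ^ (min j j') - 1 := by
    have step : ∀ i, (if i ≤ j then (1:ℤ) else 0) * (if i ≤ j' then (1:ℤ) else 0) *
          ((p:ℤ)^i - (p:ℤ)^(i-1))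
        = if i ≤ min j j' then ((p:ℤ)^i - (p:ℤ)^(i-1)) else 0 := by
      intro i
      by_cases h1 : i ≤ j <;> by_cases h2 : i ≤ j' <;> simp [h1, h2, le_min_iff]
    rw [Finset.sum_congr rfl (fun i _ => step i)]
    have hss := Finset.sum_subset (s₁ := Finset.Ioc 0 (min j j')) (s₂ := Finset.Ioc 0 n)
      (f := fun i => if i ≤ min j j' then ((p:ℤ)^i - (p:ℤ)^(i-1)) else 0)
      (Finset.Ioc_subset_Ioc_right hk) (fun x hx hnx => by
        show (if x ≤ min j j' then ((p:ℤ)^x - (p:ℤ)^(x-1)) else 0) = 0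
        rw [Finset.mem_Ioc] at hx
        rw [if_neg]
        intro hle
        exact hnx (Finset.mem_Ioc.2 ⟨hx.1, hle⟩))
    rw [← hss, Finset.sum_congr rfl (fun i hi => if_pos (Finset.mem_Ioc.1 hi).2), T_geom]
  rw [hsum]
  by_cases hmin : min j j' ≤ r
  · have hchi : (if r+1 ≤ j then (1:ℤ) else 0) * (if r+1 ≤ j' then (1:ℤ) else 0) = 0 := by
      rcases min_le_iff.1 hmin with h | h
      · rw [if_neg (show ¬ (r+1 ≤ j) by omega), zero_mul]
      · rw [if_neg (show ¬ (r+1 ≤ j') by omega), mul_zero]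
    rw [if_pos hmin, hchi, pow_add]
    ring
  · push_neg at hmin
    rw [if_neg (by omega), if_pos (by omega : r+1 ≤ j), if_pos (by omega : r+1 ≤ j')]
    have : min j j' ≤ j := min_le_left _ _
    have : min j j' ≤ j' := min_le_right _ _
    ring

lemma key_arith (p r s n : ℕ) (hn : n = r + s) (hn1 : 1 ≤ n) :
    (p:ℤ)^2 * (∑ j ∈ Finset.range (n+1), ∑ j' ∈ Finset.range (n+1),
        aI p n j * aI p n j' * (if min j j' ≤ r then (p:ℤ) ^ (n + min j j') else 0))
    = (p:ℤ)^(2*r) * ((p:ℤ)^(3*s) * ((p:ℤ)+1) * ((p:ℤ)^(r+1) - 1)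
        + if s = 0 then 1 else 0) := by
  -- rewrite each term via PT and factor
  have hPT : ∀ j ∈ Finset.range (n+1), ∀ j' ∈ Finset.range (n+1),
      aI p n j * aI p n j' * (if min j j' ≤ r then (p:ℤ) ^ (n + min j j') else 0)
      = aI p n j * aI p n j' * ((p:ℤ) ^ n *
          ((1 - (if r+1 ≤ j then (1:ℤ) else 0) * (if r+1 ≤ j' then (1:ℤ) else 0)) *
          (1 + ∑ i ∈ Finset.Ioc 0 n,
            (if i ≤ j then (1:ℤ) else 0) * (if i ≤ j' then (1:ℤ) else 0) *
              ((p:ℤ)^i - (p:ℤ)^(i-1))))) := by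
    intro j hj j' hj'
    rw [Finset.mem_range] at hj hj'
    rw [PT p (by omega) (by omega)]
  rw [Finset.sum_congr rfl (fun j hj => Finset.sum_congr rfl (fun j' hj' => hPT j hj j' hj'))]
  have e := expand (Finset.range (n+1)) (Finset.Ioc 0 n) (aI p n)
      (fun j => if r+1 ≤ j then (1:ℤ) else 0) (fun i j => if i ≤ j then (1:ℤ) else 0)
      (fun i => (p:ℤ)^i - (p:ℤ)^(i-1)) ((p:ℤ)^n)
  beta_reduce at e
  rw [e]
  -- evaluate the single sums
  have hP : (∑ j ∈ Finset.range (n+1), aI p n j) = (p:ℤ)^n := by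
    have h0 := G1 (p := p) (n := n) (t := 0) (Nat.zero_le n)
    rw [Finset.sum_congr rfl (fun j _ => if_pos (Nat.zero_le j)), Nat.sub_zero] at h0
    exact h0
  have hU : ∀ i ∈ Finset.Ioc 0 n,
      (∑ j ∈ Finset.range (n+1), aI p n j * (if i ≤ j then (1:ℤ) else 0)) = (p:ℤ)^(n-i) := by
    intro i hi
    rw [Finset.mem_Ioc] at hi
    have step : ∀ j, aI p n j * (if i ≤ j then (1:ℤ) else 0) = if i ≤ j then aI p n j else 0 := by
      intro j; split_ifs <;> ring
    rw [Finset.sum_congr rfl (fun j _ => step j), G1 hi.2]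
  rw [hP]
  by_cases hs : s = 0
  · -- here r = n
    have hrn : r = n := by omega
    have hQ : (∑ j ∈ Finset.range (n+1), aI p n j * (if r+1 ≤ j then (1:ℤ) else 0)) = 0 := by
      apply Finset.sum_eq_zero
      intro j hj
      rw [Finset.mem_range] at hj
      rw [if_neg (by omega), mul_zero]
    have hV : ∀ i ∈ Finset.Ioc 0 n,
        ((fun i => (p:ℤ)^i - (p:ℤ)^(i-1)) i) *
          ((∑ j ∈ Finset.range (n+1), aI p n j * (if i ≤ j then (1:ℤ) else 0))^2
           - (∑ j ∈ Finset.range (n+1),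
                aI p n j * (if r+1 ≤ j then (1:ℤ) else 0) * (if i ≤ j then (1:ℤ) else 0))^2)
        = ((p:ℤ)^i - (p:ℤ)^(i-1)) * ((p:ℤ)^(n-i))^2 := by
      intro i hi
      have hz : (∑ j ∈ Finset.range (n+1),
          aI p n j * (if r+1 ≤ j then (1:ℤ) else 0) * (if i ≤ j then (1:ℤ) else 0)) = 0 := by
        apply Finset.sum_eq_zero
        intro j hj
        rw [Finset.mem_range] at hj
        rw [if_neg (show ¬ (r+1 ≤ j) by omega), mul_zero, zero_mul]
      rw [hz, hU i hi]
      ring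
    rw [hQ, Finset.sum_congr rfl hV, T_weight p n 0 n (Nat.zero_le n) le_rfl]
    subst hrn hs
    obtain ⟨n', rfl⟩ : ∃ n', r = n' + 1 := ⟨r - 1, by omega⟩
    rw [show 2*(n'+1)-1-0 = 2*n'+1 by omega, show 2*(n'+1)-1-(n'+1) = n' by omega,
      if_pos rfl]
    ring
  · -- here r + 1 ≤ n
    have hrn : r + 1 ≤ n := by omega
    have hQ : (∑ j ∈ Finset.range (n+1), aI p n j * (if r+1 ≤ j then (1:ℤ) else 0))
        = (p:ℤ)^(n-(r+1)) := by
      have step : ∀ j, aI p n j * (if r+1 ≤ j then (1:ℤ) else 0)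
          = if r+1 ≤ j then aI p n j else 0 := by
        intro j; split_ifs <;> ring
      rw [Finset.sum_congr rfl (fun j _ => step j), G1 hrn]
    have hV : ∀ i ∈ Finset.Ioc 0 n,
        (∑ j ∈ Finset.range (n+1),
            aI p n j * (if r+1 ≤ j then (1:ℤ) else 0) * (if i ≤ j then (1:ℤ) else 0))
          = (p:ℤ)^(n - max i (r+1)) := by
      intro i hi
      rw [Finset.mem_Ioc] at hi
      have step : ∀ j, aI p n j * (if r+1 ≤ j then (1:ℤ) else 0) * (if i ≤ j then (1:ℤ) else 0)
          = if max i (r+1) ≤ j then aI p n j else 0 := by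
        intro j
        by_cases h1 : r+1 ≤ j <;> by_cases h2 : i ≤ j <;> simp [h1, h2, max_le_iff] <;> omega
      rw [Finset.sum_congr rfl (fun j _ => step j), G1 (by omega : max i (r+1) ≤ n)]
    have hsplit : (∑ i ∈ Finset.Ioc 0 n, ((fun i => (p:ℤ)^i - (p:ℤ)^(i-1)) i) *
          ((∑ j ∈ Finset.range (n+1), aI p n j * (if i ≤ j then (1:ℤ) else 0))^2
           - (∑ j ∈ Finset.range (n+1),
                aI p n j * (if r+1 ≤ j then (1:ℤ) else 0) * (if i ≤ j then (1:ℤ) else 0))^2))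
        = (p:ℤ)^(2*n-1) - (p:ℤ)^(2*n-1-(r+1))
          - ((p:ℤ)^(r+1) - 1) * ((p:ℤ)^(n-(r+1)))^2 := by
      rw [← Finset.sum_Ioc_consecutive _ (Nat.zero_le (r+1)) hrn]
      have part2 : (∑ i ∈ Finset.Ioc (r+1) n, ((fun i => (p:ℤ)^i - (p:ℤ)^(i-1)) i) *
          ((∑ j ∈ Finset.range (n+1), aI p n j * (if i ≤ j then (1:ℤ) else 0))^2
           - (∑ j ∈ Finset.range (n+1),
                aI p n j * (if r+1 ≤ j then (1:ℤ) else 0) * (if i ≤ j then (1:ℤ) else 0))^2))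
          = 0 := by
        apply Finset.sum_eq_zero
        intro i hi
        have hi2 : i ∈ Finset.Ioc 0 n := by
          rw [Finset.mem_Ioc] at hi ⊢; omega
        rw [hU i hi2, hV i hi2]
        rw [Finset.mem_Ioc] at hi
        rw [show max i (r+1) = i by omega]
        ring
      rw [part2, add_zero]
      have part1 : ∀ i ∈ Finset.Ioc 0 (r+1), ((fun i => (p:ℤ)^i - (p:ℤ)^(i-1)) i) *
          ((∑ j ∈ Finset.range (n+1), aI p n j * (if i ≤ j then (1:ℤ) else 0))^2
           - (∑ j ∈ Finset.range (n+1),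
                aI p n j * (if r+1 ≤ j then (1:ℤ) else 0) * (if i ≤ j then (1:ℤ) else 0))^2)
          = (((p:ℤ)^i - (p:ℤ)^(i-1)) * ((p:ℤ)^(n-i))^2
             - ((p:ℤ)^i - (p:ℤ)^(i-1)) * ((p:ℤ)^(n-(r+1)))^2) := by
        intro i hi
        have hi2 : i ∈ Finset.Ioc 0 n := by
          rw [Finset.mem_Ioc] at hi ⊢; omega
        rw [hU i hi2, hV i hi2]
        rw [Finset.mem_Ioc] at hi
        rw [show max i (r+1) = r+1 by omega]
        ring
      rw [Finset.sum_congr rfl part1, Finset.sum_sub_distrib,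
        T_weight p n 0 (r+1) (Nat.zero_le _) hrn, ← Finset.sum_mul, T_geom]
      rw [Nat.sub_zero]
    rw [hQ, hsplit]
    obtain ⟨s', rfl⟩ : ∃ s', s = s' + 1 := ⟨s - 1, by omega⟩
    subst hn
    rw [show r+(s'+1)-(r+1) = s' by omega, show 2*(r+(s'+1))-1 = 2*r+2*s'+1 by omega,
      show 2*r+2*s'+1-(r+1) = r+2*s' by omega, if_neg hs]
    ring

lemma cast_Anat {p n : ℕ} (hp2 : 2 ≤ p) (j : ℕ) (hj : j ≤ n) :
    ((Anat p n j : ℕ) : ℤ) = aI p n j := by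
  unfold Anat aI
  split_ifs
  · norm_num
  · rw [Nat.cast_sub (Nat.pow_le_pow_right (by omega) (by omega))]
    push_cast
    ring

lemma cast_bridge (p n r : ℕ) (hp2 : 2 ≤ p) :
    ((∑ j ∈ Finset.range (n+1), ∑ j' ∈ Finset.range (n+1),
        Anat p n j * Anat p n j' * (if min j j' ≤ r then p^(n + min j j') else 0) : ℕ) : ℤ)
    = ∑ j ∈ Finset.range (n+1), ∑ j' ∈ Finset.range (n+1),
        aI p n j * aI p n j' * (if min j j' ≤ r then (p:ℤ)^(n + min j j') else 0) := by
  push_cast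
  apply Finset.sum_congr rfl
  intro j hj
  apply Finset.sum_congr rfl
  intro j' hj'
  rw [Finset.mem_range] at hj hj'
  rw [cast_Anat hp2 j (by omega), cast_Anat hp2 j' (by omega)]

end DetCountAux

theorem det_count (ℓ : ℕ) (hℓ : ℓ.Prime) (M : ℕ) (hM : 1 ≤ M)
    (r s : ℕ) (hr : r = padicValNat ℓ M) :
    ℓ ^ 2 * Nat.card {σ : Matrix (Fin 2) (Fin 2) (ZMod (ℓ ^ (r + s))) //
        σ.det = (M : ZMod (ℓ ^ (r + s)))} =
      ℓ ^ (2 * r) * (ℓ ^ (3 * s) * (ℓ + 1) * (ℓ ^ (r + 1) - 1) + if s = 0 then 1 else 0) := by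
  haveI : Fact ℓ.Prime := ⟨hℓ⟩
  have h2 : 2 ≤ ℓ := hℓ.two_le
  by_cases hn0 : r + s = 0
  · obtain ⟨hr0, hs0⟩ : r = 0 ∧ s = 0 := by omega
    subst hr0 hs0
    have e : ℓ ^ (0 + 0) = 1 := by norm_num
    have hcard : Nat.card {σ : Matrix (Fin 2) (Fin 2) (ZMod (ℓ ^ (0 + 0))) //
        σ.det = (M : ZMod (ℓ ^ (0 + 0)))} = 1 := by
      rw [Nat.card_eq_fintype_card]
      apply Fintype.card_eq_one_iff.2
      haveI : Subsingleton (ZMod (ℓ ^ (0 + 0))) := by rw [e]; infer_instance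
      refine ⟨⟨0, Subsingleton.elim _ _⟩, fun b => Subtype.ext ?_⟩
      funext i k
      exact Subsingleton.elim _ _
    rw [hcard]
    obtain ⟨l, rfl⟩ : ∃ l, ℓ = l + 2 := ⟨ℓ - 2, by omega⟩
    simp only [if_pos rfl, Nat.mul_zero, pow_zero, one_mul, pow_one, Nat.zero_add, if_true]
    rw [show l + 2 - 1 = l + 1 by omega]
    ring_nf
  · haveI : NeZero (ℓ ^ (r + s)) := ⟨pow_ne_zero _ (by omega)⟩
    have hM0 : M ≠ 0 := by omega
    rw [DetCountAux.count_eq (p := ℓ) (n := r + s) hM0 hr]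
    apply @Nat.cast_injective ℤ _ _
    rw [Nat.cast_mul, DetCountAux.cast_bridge ℓ (r+s) r h2]
    push_cast
    rw [DetCountAux.key_arith ℓ r s (r+s) rfl (by omega)]
    rw [Nat.cast_sub (Nat.one_le_pow _ _ (by omega))]
    push_cast
    rfl
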